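/- Let n, m be nonnegative integers with n + m ≥ 1 and write z = (x,y) ∈ [0,∞)^n × ℝ^m. Let a(z) be a symmetric (n+m)×(n+m) matrix satisfying the structural condition a_{ij}(z) = δ_{ij} α_{ii}(z) + √(x_i x_j) ᾱ_{ij}(z) for 1 ≤ i,j ≤ n and a_{i,n+l}(z) = a_{n+l,i}(z) = ½ c_{il}(z) √(x_i), together with the strict ellipticity condition with constant λ > 0 over all index sets I ⊆ {1,…,n}. Fix r_0 ∈ (0,1) and let Ā_{r_0} := {z = (x,y) : x_k ∈ [0,r_0] for all k = 1,…,n}. Then for every z ∈ Ā_{r_0}, ξ ∈ ℝ^n and η ∈ ℝ^m, the quadratic form Q(ξ,η) := Σ_{i,j=1}^n a_{ij}(z)ξ_iξ_j + Σ_{i=1}^n Σ_{l=1}^m (a_{i,n+l}(z)+a_{n+l,i}(z))ξ_iη_l + Σ_{l,k=1}^m a_{n+l,n+k}(z)η_lη_k satisfies Q(ξ,η) ≥ λ(Σ_{i=1}^n x_i ξ_i² + |η|²) + Σ_{i=1}^n (1 − x_i) α_{ii}(z) ξ_i². In particular, if in addition α_{ii}(z) ≥ λ for all i = 1,…,n and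 all z ∈ Ā_{r_0}, then Q(ξ,η) ≥ (1 − r_0) λ (|ξ|² + |η|²), i.e. a(z) is uniformly strictly positive definite on Ā_{r_0}. -/

import Mathlib

open Matrix Finset

/-- Under the structural condition on the symmetric matrix `a` and the
strict ellipticity condition with constant `lam > 0`, on the region
`Ā_{r₀} = {(x,y) : 0 ≤ x i ≤ r₀}` (with `r₀ ∈ (0,1)`) the quadratic form
`Q(ξ,η) = Σ a_{ij} ξ_i ξ_j + Σ (a_{i,n+l} + a_{n+l,i}) ξ_i η_l + Σ a_{n+l,n+k} η_l η_k`
satisfies `Q ≥ lam (Σ x_i ξ_i² + |η|²) + Σ (1 - x_i) α_{ii} ξ_i²`; in particular, if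
moreover `α_{ii} ≥ lam` on `Ā_{r₀}`, then `Q ≥ (1 - r₀) lam (|ξ|² + |η|²)`. -/
theorem quadratic_form_lower_bound_near_corner
    (n m : ℕ) (hnm : 1 ≤ n + m) (lam : ℝ) (hlam : 0 < lam)
    (r₀ : ℝ) (hr₀ : r₀ ∈ Set.Ioo (0 : ℝ) 1)
    (a : ((Fin n → ℝ) × (Fin m → ℝ)) → Matrix (Fin n ⊕ Fin m) (Fin n ⊕ Fin m) ℝ)
    (α : ((Fin n → ℝ) × (Fin m → ℝ)) → Fin n → ℝ)
    (ᾱ : ((Fin n → ℝ) × (Fin m → ℝ)) → Fin n → Fin n → ℝ)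
    (c : ((Fin n → ℝ) × (Fin m → ℝ)) → Fin n → Fin m → ℝ)
    -- `a` is symmetric
    (hsymm : ∀ p, (∀ i, 0 ≤ p.1 i) → (a p).IsSymm)
    -- structural condition on the entries of `a`
    (h_aXX : ∀ p, (∀ i, 0 ≤ p.1 i) → ∀ i j : Fin n,
      a p (Sum.inl i) (Sum.inl j)
        = (if i = j then α p i else 0) + Real.sqrt (p.1 i * p.1 j) * ᾱ p i j)
    (h_aXY : ∀ p, (∀ i, 0 ≤ p.1 i) → ∀ (i : Fin n) (l : Fin m),
      a p (Sum.inl i) (Sum.inr l) = (1 / 2 : ℝ) * c p i l * Real.sqrt (p.1 i)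
        ∧ a p (Sum.inr l) (Sum.inl i) = (1 / 2 : ℝ) * c p i l * Real.sqrt (p.1 i))
    -- strict ellipticity over the closure of each region `M_I`
    (h_ell : ∀ I : Finset (Fin n),
      ∀ p ∈ closure {q : (Fin n → ℝ) × (Fin m → ℝ) |
        (∀ i ∈ I, q.1 i ∈ Set.Ioo (0 : ℝ) 1) ∧ (∀ i ∉ I, q.1 i ∈ Set.Ioi (1 : ℝ))},
      ∀ (ξ : Fin n → ℝ) (η : Fin m → ℝ),
        lam * ((∑ i, ξ i ^ 2) + ∑ l, η l ^ 2)
          ≤ (∑ i ∈ I, α p i * ξ i ^ 2) + (∑ i ∈ Iᶜ, p.1 i * α p i * ξ i ^ 2)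
            + (∑ i ∈ I, ∑ j ∈ I, ᾱ p i j * ξ i * ξ j)
            + (∑ i ∈ I, ∑ j ∈ Iᶜ, p.1 j * (ᾱ p i j + ᾱ p j i) * ξ i * ξ j)
            + (∑ i ∈ Iᶜ, ∑ j ∈ Iᶜ, p.1 i * p.1 j * ᾱ p i j * ξ i * ξ j)
            + (∑ i ∈ I, ∑ l, c p i l * ξ i * η l)
            + (∑ i ∈ Iᶜ, ∑ l, p.1 i * c p i l * ξ i * η l)
            + (∑ k, ∑ l, a p (Sum.inr k) (Sum.inr l) * η k * η l)) :
    (∀ p : (Fin n → ℝ) × (Fin m → ℝ), (∀ i, 0 ≤ p.1 i ∧ p.1 i ≤ r₀) →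
      ∀ (ξ : Fin n → ℝ) (η : Fin m → ℝ),
        lam * ((∑ i, p.1 i * ξ i ^ 2) + ∑ l, η l ^ 2)
            + (∑ i, (1 - p.1 i) * α p i * ξ i ^ 2)
          ≤ (∑ i, ∑ j, a p (Sum.inl i) (Sum.inl j) * ξ i * ξ j)
            + (∑ i, ∑ l, (a p (Sum.inl i) (Sum.inr l) + a p (Sum.inr l) (Sum.inl i))
                * ξ i * η l)
            + (∑ l, ∑ k, a p (Sum.inr l) (Sum.inr k) * η l * η k)) ∧
    ((∀ p : (Fin n → ℝ) × (Fin m → ℝ), (∀ i, 0 ≤ p.1 i ∧ p.1 i ≤ r₀) →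
        ∀ i, lam ≤ α p i) →
      ∀ p : (Fin n → ℝ) × (Fin m → ℝ), (∀ i, 0 ≤ p.1 i ∧ p.1 i ≤ r₀) →
      ∀ (ξ : Fin n → ℝ) (η : Fin m → ℝ),
        (1 - r₀) * lam * ((∑ i, ξ i ^ 2) + ∑ l, η l ^ 2)
          ≤ (∑ i, ∑ j, a p (Sum.inl i) (Sum.inl j) * ξ i * ξ j)
            + (∑ i, ∑ l, (a p (Sum.inl i) (Sum.inr l) + a p (Sum.inr l) (Sum.inl i))
                * ξ i * η l)
            + (∑ l, ∑ k, a p (Sum.inr l) (Sum.inr k) * η l * η k)) := by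
  obtain ⟨hr₀0, hr₀1⟩ := hr₀
  have key : ∀ p : (Fin n → ℝ) × (Fin m → ℝ), (∀ i, 0 ≤ p.1 i ∧ p.1 i ≤ r₀) →
      ∀ (ξ : Fin n → ℝ) (η : Fin m → ℝ),
        lam * ((∑ i, p.1 i * ξ i ^ 2) + ∑ l, η l ^ 2)
            + (∑ i, (1 - p.1 i) * α p i * ξ i ^ 2)
          ≤ (∑ i, ∑ j, a p (Sum.inl i) (Sum.inl j) * ξ i * ξ j)
            + (∑ i, ∑ l, (a p (Sum.inl i) (Sum.inr l) + a p (Sum.inr l) (Sum.inl i))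
                * ξ i * η l)
            + (∑ l, ∑ k, a p (Sum.inr l) (Sum.inr k) * η l * η k) := by
    intro p hp ξ η
    have hx0 : ∀ i, 0 ≤ p.1 i := fun i => (hp i).1
    have hx1 : ∀ i, p.1 i < 1 := fun i => lt_of_le_of_lt (hp i).2 hr₀1
    -- p is in the closure of M_{univ}
    have hpcl : p ∈ closure {q : (Fin n → ℝ) × (Fin m → ℝ) |
        (∀ i ∈ (Finset.univ : Finset (Fin n)), q.1 i ∈ Set.Ioo (0 : ℝ) 1) ∧
        (∀ i ∉ (Finset.univ : Finset (Fin n)), q.1 i ∈ Set.Ioi (1 : ℝ))} := by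
      have hne : (nhdsWithin (0:ℝ) (Set.Ioi 0)).NeBot := nhdsGT_neBot 0
      set f : ℝ → (Fin n → ℝ) × (Fin m → ℝ) :=
        fun t => ((fun i => (1 - t) * p.1 i + t * (1/2)), p.2) with hf
      have hcont : Continuous f := by
        apply Continuous.prodMk
        · exact continuous_pi fun i => by fun_prop
        · exact continuous_const
      have hf0 : f 0 = p := by
        simp [hf]
      have htend : Filter.Tendsto f (nhdsWithin (0:ℝ) (Set.Ioi 0)) (nhds p) := by
        rw [← hf0]
        exact (hcont.tendsto 0).mono_left nhdsWithin_le_nhds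
      refine mem_closure_of_tendsto htend ?_
      filter_upwards [Ioo_mem_nhdsGT_of_mem (by constructor <;> norm_num :
        (0:ℝ) ∈ Set.Ico 0 1)] with t ht
      refine ⟨fun i _ => ?_, fun i hi => absurd (Finset.mem_univ i) hi⟩
      obtain ⟨ht0, ht1⟩ := ht
      constructor
      · have := hx0 i
        have h1t : 0 < 1 - t ∨ 0 ≤ 1 - t := Or.inr (by linarith)
        show 0 < (1 - t) * p.1 i + t * (1/2)
        nlinarith
      · have := hx1 i
        show (1 - t) * p.1 i + t * (1/2) < 1
        nlinarith
    have h := h_ell Finset.univ p hpcl (fun i => Real.sqrt (p.1 i) * ξ i) η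
    simp only [Finset.compl_univ, Finset.sum_empty, Finset.mem_univ, not_true_eq_false,
      Finset.sum_const_zero, add_zero, zero_add] at h
    have hsq : ∀ i, (Real.sqrt (p.1 i) * ξ i) ^ 2 = p.1 i * ξ i ^ 2 := by
      intro i
      rw [mul_pow, Real.sq_sqrt (hx0 i)]
    -- rewrite the quadratic form
    have e1 : ∑ i, ∑ j, a p (Sum.inl i) (Sum.inl j) * ξ i * ξ j
        = (∑ i, α p i * ξ i ^ 2)
          + ∑ i, ∑ j, ᾱ p i j * (Real.sqrt (p.1 i) * ξ i) * (Real.sqrt (p.1 j) * ξ j) := by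
      have : ∀ i j : Fin n, a p (Sum.inl i) (Sum.inl j) * ξ i * ξ j
          = (if i = j then α p i * ξ i * ξ j else 0)
            + ᾱ p i j * (Real.sqrt (p.1 i) * ξ i) * (Real.sqrt (p.1 j) * ξ j) := by
        intro i j
        rw [h_aXX p hx0 i j, Real.sqrt_mul (hx0 i)]
        by_cases hij : i = j <;> simp [hij] <;> ring
      rw [Finset.sum_congr rfl fun i _ => Finset.sum_congr rfl fun j _ => this i j]
      rw [Finset.sum_congr rfl fun i (_ : i ∈ Finset.univ) => Finset.sum_add_distrib,
        Finset.sum_add_distrib]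
      congr 1
      apply Finset.sum_congr rfl
      intro i _
      rw [Finset.sum_ite_eq (Finset.univ : Finset (Fin n)) i (fun j => α p i * ξ i * ξ j)]
      simp [sq]
      ring
    have e2 : ∑ i, ∑ l, (a p (Sum.inl i) (Sum.inr l) + a p (Sum.inr l) (Sum.inl i)) * ξ i * η l
        = ∑ i, ∑ l, c p i l * (Real.sqrt (p.1 i) * ξ i) * η l := by
      apply Finset.sum_congr rfl
      intro i _
      apply Finset.sum_congr rfl
      intro l _
      obtain ⟨h1, h2⟩ := h_aXY p hx0 i l
      rw [h1, h2]
      ring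
    have e4 : ∑ i, α p i * (Real.sqrt (p.1 i) * ξ i) ^ 2 = ∑ i, p.1 i * α p i * ξ i ^ 2 := by
      apply Finset.sum_congr rfl
      intro i _
      rw [hsq i]; ring
    have e5 : ∑ i, (Real.sqrt (p.1 i) * ξ i) ^ 2 = ∑ i, p.1 i * ξ i ^ 2 :=
      Finset.sum_congr rfl fun i _ => hsq i
    have e6 : (∑ i, (1 - p.1 i) * α p i * ξ i ^ 2) + ∑ i, p.1 i * α p i * ξ i ^ 2
        = ∑ i, α p i * ξ i ^ 2 := by
      rw [← Finset.sum_add_distrib]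
      apply Finset.sum_congr rfl
      intro i _
      ring
    rw [e5, e4] at h
    rw [e1, e2]
    linarith
  refine ⟨key, ?_⟩
  intro hα p hp ξ η
  have hx0 : ∀ i, 0 ≤ p.1 i := fun i => (hp i).1
  have hA : (0:ℝ) ≤ ∑ i, ξ i ^ 2 := Finset.sum_nonneg fun i _ => sq_nonneg _
  have hB : (0:ℝ) ≤ ∑ l, η l ^ 2 := Finset.sum_nonneg fun l _ => sq_nonneg _
  have hterm : ∑ i, (1 - p.1 i) * lam * ξ i ^ 2 ≤ ∑ i, (1 - p.1 i) * α p i * ξ i ^ 2 := by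
    apply Finset.sum_le_sum
    intro i _
    have h1 : lam ≤ α p i := hα p hp i
    have h2 : p.1 i ≤ r₀ := (hp i).2
    nlinarith [mul_nonneg (mul_nonneg (by linarith : (0:ℝ) ≤ 1 - p.1 i)
      (by linarith : (0:ℝ) ≤ α p i - lam)) (sq_nonneg (ξ i))]
  have hsum : ∑ i, (1 - p.1 i) * lam * ξ i ^ 2
      = lam * (∑ i, ξ i ^ 2) - lam * (∑ i, p.1 i * ξ i ^ 2) := by
    rw [Finset.mul_sum, Finset.mul_sum, ← Finset.sum_sub_distrib]
    apply Finset.sum_congr rfl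
    intro i _
    ring
  have hkey := key p hp ξ η
  have h0 : 0 ≤ r₀ * (lam * ((∑ i, ξ i ^ 2) + ∑ l, η l ^ 2)) := by positivity
  nlinarith
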